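/- Let L be an abstract bi-intuitionistic logic extending BIL, and let (M₁,w₁), (M₂,w₂) be pointed Θ-models with Th⁺_BIL(M₁,w₁) ⊆ Th⁺_BIL(M₂,w₂), where both M₁ and M₂ are L-saturated. Then the relation A defined by u A s iff Th⁺_BIL(M_i,u) ⊆ Th⁺_BIL(M_j,s) (for u ∈ W_i, s ∈ W_j, {i,j} = {1,2}) is a bi-asimulation from (M₁,w₁) to (M₂,w₂). -/

import Mathlib

/-! Common vocabulary for bi-intuitionistic propositional logic (BIL),
Kripke models, bi-asimulations, abstract bi-intuitionistic logics and
bi-unravellings, following Olkhovikov & Badia,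
"Maximality of bi-intuitionistic propositional logic". -/

/-- Formulas of bi-intuitionistic propositional logic over the type `A` of
propositional letters. -/
inductive BILForm (A : Type) : Type
  | bot : BILForm A
  | atom : A → BILForm A
  | conj : BILForm A → BILForm A → BILForm A
  | disj : BILForm A → BILForm A → BILForm A
  | impl : BILForm A → BILForm A → BILForm A
  | coimpl : BILForm A → BILForm A → BILForm A

namespace BILForm

/-- The propositional letters occurring in a formula; a formula belongs to
`BIL(Θ)` iff its letters are contained in `Θ`. -/
def letters {A : Type} : BILForm A → Set A
  | bot => ∅
  | atom p => {p}
  | conj φ ψ => letters φ ∪ letters ψ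
  | disj φ ψ => letters φ ∪ letters ψ
  | impl φ ψ => letters φ ∪ letters ψ
  | coimpl φ ψ => letters φ ∪ letters ψ

end BILForm

/-- A (bi-intuitionistic) Kripke model with propositional letters `A`,
carried on the subset `dom` of the type `Ω`: a nonempty set of worlds,
partially ordered by `rel`, together with a monotone valuation. -/
structure SKModel (A : Type) (Ω : Type) : Type where
  dom : Set Ω
  nonempty : dom.Nonempty
  rel : Ω → Ω → Prop
  rel_mem : ∀ {u v}, rel u v → u ∈ dom ∧ v ∈ dom
  rel_refl : ∀ u ∈ dom, rel u u
  rel_trans : ∀ {u v w}, rel u v → rel v w → rel u w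
  rel_antisymm : ∀ {u v}, rel u v → rel v u → u = v
  val : A → Set Ω
  val_mem : ∀ p, val p ⊆ dom
  val_mono : ∀ (p : A) {u v}, rel u v → u ∈ val p → v ∈ val p

/-- Kripke satisfaction for bi-intuitionistic formulas. -/
def BILSat {A Ω : Type} (M : SKModel A Ω) : BILForm A → Ω → Prop
  | .bot, _ => False
  | .atom p, w => w ∈ M.val p
  | .conj φ ψ, w => BILSat M φ w ∧ BILSat M ψ w
  | .disj φ ψ, w => BILSat M φ w ∨ BILSat M ψ w
  | .impl φ ψ, w => ∀ v, M.rel w v → BILSat M φ v → BILSat M ψ v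
  | .coimpl φ ψ, w => ∃ v, M.rel v w ∧ BILSat M φ v ∧ ¬ BILSat M ψ v

/-- `(Γ, Δ)` is satisfied at `(M, w)`: all of `Γ` true, all of `Δ` false. -/
def BILSatTh {A Ω : Type} (M : SKModel A Ω) (w : Ω) (Γ Δ : Set (BILForm A)) : Prop :=
  (∀ φ ∈ Γ, BILSat M φ w) ∧ (∀ φ ∈ Δ, ¬ BILSat M φ w)

/-- `Th⁺_BIL(M₁,w₁) ⊆ Th⁺_BIL(M₂,w₂)` over the signature `Θ`. -/
def BILThPosSubset {A Ω₁ Ω₂ : Type} (Θ : Set A) (M₁ : SKModel A Ω₁) (w₁ : Ω₁)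
    (M₂ : SKModel A Ω₂) (w₂ : Ω₂) : Prop :=
  ∀ φ : BILForm A, φ.letters ⊆ Θ → BILSat M₁ φ w₁ → BILSat M₂ φ w₂

/-- `Th_BIL(M₁,w₁) = Th_BIL(M₂,w₂)` over the signature `Θ`. -/
def BILThEq {A Ω₁ Ω₂ : Type} (Θ : Set A) (M₁ : SKModel A Ω₁) (w₁ : Ω₁)
    (M₂ : SKModel A Ω₂) (w₂ : Ω₂) : Prop :=
  ∀ φ : BILForm A, φ.letters ⊆ Θ → (BILSat M₁ φ w₁ ↔ BILSat M₂ φ w₂)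

/-- A bi-asimulation (over the signature `Θ`) from `(M₁,w₁)` to `(M₂,w₂)`,
given by its two components `R ⊆ W₁ × W₂` and `S ⊆ W₂ × W₁`. -/
structure IsBiAsim {A Ω₁ Ω₂ : Type} (Θ : Set A) (M₁ : SKModel A Ω₁) (M₂ : SKModel A Ω₂)
    (w₁ : Ω₁) (w₂ : Ω₂) (R : Ω₁ → Ω₂ → Prop) (S : Ω₂ → Ω₁ → Prop) : Prop where
  memR : ∀ {v s}, R v s → v ∈ M₁.dom ∧ s ∈ M₂.dom
  memS : ∀ {v s}, S v s → v ∈ M₂.dom ∧ s ∈ M₁.dom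
  elem : R w₁ w₂
  atomR : ∀ p ∈ Θ, ∀ {v s}, R v s → v ∈ M₁.val p → s ∈ M₂.val p
  atomS : ∀ p ∈ Θ, ∀ {v s}, S v s → v ∈ M₂.val p → s ∈ M₁.val p
  backR : ∀ {v s t}, R v s → M₂.rel s t → ∃ u, M₁.rel v u ∧ S t u ∧ R u t
  backS : ∀ {v s t}, S v s → M₁.rel s t → ∃ u, M₂.rel v u ∧ R t u ∧ S u t
  forthR : ∀ {v s u}, R v s → M₁.rel u v → ∃ t, M₂.rel t s ∧ S t u ∧ R u t
  forthS : ∀ {v s u}, S v s → M₂.rel u v → ∃ t, M₁.rel t s ∧ R t u ∧ S u t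

/-- `M` is a submodel of `N`. -/
def Submodel {A Ω : Type} (M N : SKModel A Ω) : Prop :=
  M.dom ⊆ N.dom ∧ (∀ u ∈ M.dom, ∀ v ∈ M.dom, (M.rel u v ↔ N.rel u v)) ∧
    ∀ p, M.val p = N.val p ∩ M.dom

/-- `U` is the union of the countable chain `Mc` of models. -/
def IsUnionOfChain {A Ω : Type} (Mc : ℕ → SKModel A Ω) (U : SKModel A Ω) : Prop :=
  U.dom = ⋃ n, (Mc n).dom ∧ (∀ u v, U.rel u v ↔ ∃ n, (Mc n).rel u v) ∧
    ∀ p, U.val p = ⋃ n, (Mc n).val p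

/-- `N'` has the same frame as `N` and the same valuation on the letters in
`Θ` (this expresses both `Σ`-expansions and `Σ`-reducts). -/
def IsExpansion {A Ω : Type} (Θ : Set A) (N N' : SKModel A Ω) : Prop :=
  N'.dom = N.dom ∧ (∀ u v, N'.rel u v ↔ N.rel u v) ∧ ∀ p ∈ Θ, N'.val p = N.val p

/-- `M ≼_BIL N` over the signature `Θ`. -/
def BILElemSub {A Ω : Type} (Θ : Set A) (M N : SKModel A Ω) : Prop :=
  Submodel M N ∧ ∀ w ∈ M.dom, ∀ φ : BILForm A, φ.letters ⊆ Θ →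
    (BILSat M φ w ↔ BILSat N φ w)

/-- `(Γ,Δ)` is a successor BIL-type of `(M,v)` (over the signature `Θ`). -/
def BILSuccType {A Ω : Type} (Θ : Set A) (M : SKModel A Ω) (v : Ω)
    (Γ Δ : Set (BILForm A)) : Prop :=
  (∀ φ ∈ Γ, BILForm.letters φ ⊆ Θ) ∧ (∀ φ ∈ Δ, BILForm.letters φ ⊆ Θ) ∧
    ∀ Γ' ⊆ Γ, ∀ Δ' ⊆ Δ, Γ'.Finite → Δ'.Finite →
      ∃ u, M.rel v u ∧ BILSatTh M u Γ' Δ'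

/-- `(Γ,Δ)` is a predecessor BIL-type of `(M,v)` (over the signature `Θ`). -/
def BILPredType {A Ω : Type} (Θ : Set A) (M : SKModel A Ω) (v : Ω)
    (Γ Δ : Set (BILForm A)) : Prop :=
  (∀ φ ∈ Γ, BILForm.letters φ ⊆ Θ) ∧ (∀ φ ∈ Δ, BILForm.letters φ ⊆ Θ) ∧
    ∀ Γ' ⊆ Γ, ∀ Δ' ⊆ Δ, Γ'.Finite → Δ'.Finite →
      ∃ u, M.rel u v ∧ BILSatTh M u Γ' Δ'

/-- `M` is BIL-saturated (over the signature `Θ`): it realizes all of its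
successor and predecessor BIL-types. -/
def BILSaturated {A Ω : Type} (Θ : Set A) (M : SKModel A Ω) : Prop :=
  ∀ v ∈ M.dom, ∀ Γ Δ : Set (BILForm A),
    (BILSuccType Θ M v Γ Δ → ∃ u, M.rel v u ∧ BILSatTh M u Γ Δ) ∧
    (BILPredType Θ M v Γ Δ → ∃ u, M.rel u v ∧ BILSatTh M u Γ Δ)

/-- An isomorphism `g` of Kripke `Θ`-models from `M` onto `N`. -/
def BILIso {A Ω₁ Ω₂ : Type} (Θ : Set A) (M : SKModel A Ω₁) (N : SKModel A Ω₂)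
    (g : Ω₁ → Ω₂) : Prop :=
  Set.InjOn g M.dom ∧ g '' M.dom = N.dom ∧
  (∀ u ∈ M.dom, ∀ v ∈ M.dom, (M.rel u v ↔ N.rel (g u) (g v))) ∧
  (∀ p ∈ Θ, ∀ u ∈ M.dom, (u ∈ M.val p ↔ g u ∈ N.val p))

/-- An abstract bi-intuitionistic logic over the propositional letters `A`:
a set `In Θ` of `Θ`-formulas for every signature `Θ ⊆ A`, and a satisfaction
relation enjoying the Isomorphism, Expansion, Occurrence and Closure
properties. -/
structure AbsLogic (A : Type) : Type 1 where
  F : Type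
  In : Set A → Set F
  Sat : ∀ {Ω : Type}, SKModel A Ω → Ω → F → Prop
  in_mono : ∀ {Θ Θ' : Set A}, Θ ⊆ Θ' → In Θ ⊆ In Θ'
  iso_invariant : ∀ (Θ : Set A) {Ω₁ Ω₂ : Type} (M : SKModel A Ω₁) (N : SKModel A Ω₂)
      (g : Ω₁ → Ω₂), BILIso Θ M N g →
      ∀ φ ∈ In Θ, ∀ w ∈ M.dom, (Sat M w φ ↔ Sat N (g w) φ)
  expansion : ∀ (Θ : Set A) {Ω : Type} (M M' : SKModel A Ω), M.dom = M'.dom →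
      (∀ u v, M.rel u v ↔ M'.rel u v) → (∀ p ∈ Θ, M.val p = M'.val p) →
      ∀ φ ∈ In Θ, ∀ w, (Sat M w φ ↔ Sat M' w φ)
  occurrence : ∀ (Θ : Set A) (φ : F), φ ∈ In Θ →
      ∃ Θ₀ : Set A, Θ₀.Finite ∧ Θ₀ ⊆ Θ ∧ φ ∈ In Θ₀
  fbot : F
  fconj : F → F → F
  fdisj : F → F → F
  fimpl : F → F → F
  fcoimpl : F → F → F
  mem_bot : ∀ Θ, fbot ∈ In Θ
  mem_conj : ∀ {Θ φ ψ}, φ ∈ In Θ → ψ ∈ In Θ → fconj φ ψ ∈ In Θ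
  mem_disj : ∀ {Θ φ ψ}, φ ∈ In Θ → ψ ∈ In Θ → fdisj φ ψ ∈ In Θ
  mem_impl : ∀ {Θ φ ψ}, φ ∈ In Θ → ψ ∈ In Θ → fimpl φ ψ ∈ In Θ
  mem_coimpl : ∀ {Θ φ ψ}, φ ∈ In Θ → ψ ∈ In Θ → fcoimpl φ ψ ∈ In Θ
  sat_bot : ∀ {Ω : Type} (M : SKModel A Ω) (w : Ω), ¬ Sat M w fbot
  sat_conj : ∀ {Ω : Type} (M : SKModel A Ω) (w : Ω) (φ ψ : F),
      Sat M w (fconj φ ψ) ↔ (Sat M w φ ∧ Sat M w ψ)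
  sat_disj : ∀ {Ω : Type} (M : SKModel A Ω) (w : Ω) (φ ψ : F),
      Sat M w (fdisj φ ψ) ↔ (Sat M w φ ∨ Sat M w ψ)
  sat_impl : ∀ {Ω : Type} (M : SKModel A Ω) (w : Ω) (φ ψ : F),
      Sat M w (fimpl φ ψ) ↔ ∀ v, M.rel w v → Sat M v φ → Sat M v ψ
  sat_coimpl : ∀ {Ω : Type} (M : SKModel A Ω) (w : Ω) (φ ψ : F),
      Sat M w (fcoimpl φ ψ) ↔ ∃ v, M.rel v w ∧ Sat M v φ ∧ ¬ Sat M v ψ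

namespace AbsLogic

variable {A : Type}

/-- The `L`-theory `(Γ,Δ)` is satisfied at `(M,w)`. -/
def SatTh (L : AbsLogic A) {Ω : Type} (M : SKModel A Ω) (w : Ω) (Γ Δ : Set L.F) : Prop :=
  (∀ φ ∈ Γ, L.Sat M w φ) ∧ (∀ φ ∈ Δ, ¬ L.Sat M w φ)

/-- `Th⁺_L(M₁,w₁) ⊆ Th⁺_L(M₂,w₂)` over the signature `Θ`. -/
def ThPosSubset (L : AbsLogic A) (Θ : Set A) {Ω₁ Ω₂ : Type} (M₁ : SKModel A Ω₁) (w₁ : Ω₁)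
    (M₂ : SKModel A Ω₂) (w₂ : Ω₂) : Prop :=
  ∀ φ ∈ L.In Θ, L.Sat M₁ w₁ φ → L.Sat M₂ w₂ φ

/-- `Th_L(M₁,w₁) = Th_L(M₂,w₂)` over the signature `Θ`. -/
def ThEq (L : AbsLogic A) (Θ : Set A) {Ω₁ Ω₂ : Type} (M₁ : SKModel A Ω₁) (w₁ : Ω₁)
    (M₂ : SKModel A Ω₂) (w₂ : Ω₂) : Prop :=
  ∀ φ ∈ L.In Θ, (L.Sat M₁ w₁ φ ↔ L.Sat M₂ w₂ φ)

/-- `L` is preserved under bi-asimulations. -/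
def Preserved (L : AbsLogic A) : Prop :=
  ∀ (Θ : Set A) (Ω₁ Ω₂ : Type) (M₁ : SKModel A Ω₁) (M₂ : SKModel A Ω₂)
    (w₁ : Ω₁) (w₂ : Ω₂) (R : Ω₁ → Ω₂ → Prop) (S : Ω₂ → Ω₁ → Prop),
    IsBiAsim Θ M₁ M₂ w₁ w₂ R S → L.ThPosSubset Θ M₁ w₁ M₂ w₂

/-- `L` is ★-compact. -/
def StarCompact (L : AbsLogic A) : Prop :=
  ∀ (Θ : Set A) (Γ Δ : Set L.F), Γ ⊆ L.In Θ → Δ ⊆ L.In Θ →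
    (∀ Γ' ⊆ Γ, ∀ Δ' ⊆ Δ, Γ'.Finite → Δ'.Finite →
      ∃ (Ω : Type) (M : SKModel A Ω) (w : Ω), w ∈ M.dom ∧ L.SatTh M w Γ' Δ') →
    ∃ (Ω : Type) (M : SKModel A Ω) (w : Ω), w ∈ M.dom ∧ L.SatTh M w Γ Δ

/-- `M ≼_L N` over the signature `Θ`. -/
def ElemSub (L : AbsLogic A) (Θ : Set A) {Ω : Type} (M N : SKModel A Ω) : Prop :=
  Submodel M N ∧ ∀ w ∈ M.dom, ∀ φ ∈ L.In Θ, (L.Sat M w φ ↔ L.Sat N w φ)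

/-- `L` has the Tarski Union Property. -/
def HasTUP (L : AbsLogic A) : Prop :=
  ∀ (Θ : Set A) (Ω : Type) (Mc : ℕ → SKModel A Ω),
    (∀ n, L.ElemSub Θ (Mc n) (Mc (n + 1))) →
    ∀ U : SKModel A Ω, IsUnionOfChain Mc U → ∀ n, L.ElemSub Θ (Mc n) U

/-- `(Γ,Δ)` is a successor `L`-type of `(M,v)` (over the signature `Θ`). -/
def SuccType (L : AbsLogic A) (Θ : Set A) {Ω : Type} (M : SKModel A Ω) (v : Ω)
    (Γ Δ : Set L.F) : Prop :=
  Γ ⊆ L.In Θ ∧ Δ ⊆ L.In Θ ∧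
    ∀ Γ' ⊆ Γ, ∀ Δ' ⊆ Δ, Γ'.Finite → Δ'.Finite →
      ∃ u, M.rel v u ∧ L.SatTh M u Γ' Δ'

/-- `(Γ,Δ)` is a predecessor `L`-type of `(M,v)` (over the signature `Θ`). -/
def PredType (L : AbsLogic A) (Θ : Set A) {Ω : Type} (M : SKModel A Ω) (v : Ω)
    (Γ Δ : Set L.F) : Prop :=
  Γ ⊆ L.In Θ ∧ Δ ⊆ L.In Θ ∧
    ∀ Γ' ⊆ Γ, ∀ Δ' ⊆ Δ, Γ'.Finite → Δ'.Finite →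
      ∃ u, M.rel u v ∧ L.SatTh M u Γ' Δ'

/-- `M` is `L`-saturated (over the signature `Θ`). -/
def Saturated (L : AbsLogic A) (Θ : Set A) {Ω : Type} (M : SKModel A Ω) : Prop :=
  ∀ v ∈ M.dom, ∀ Γ Δ : Set L.F,
    (L.SuccType Θ M v Γ Δ → ∃ u, M.rel v u ∧ L.SatTh M u Γ Δ) ∧
    (L.PredType Θ M v Γ Δ → ∃ u, M.rel u v ∧ L.SatTh M u Γ Δ)

/-- An `L`-elementary embedding of `M` into `N` (over the signature `Θ`). -/
def ElemEmbedding (L : AbsLogic A) (Θ : Set A) {Ω₁ Ω₂ : Type}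
    (M : SKModel A Ω₁) (N : SKModel A Ω₂) (f : Ω₁ → Ω₂) : Prop :=
  Set.InjOn f M.dom ∧ Set.MapsTo f M.dom N.dom ∧
  (∀ u ∈ M.dom, ∀ v ∈ M.dom, (M.rel u v ↔ N.rel (f u) (f v))) ∧
  (∀ u ∈ M.dom, ∀ φ ∈ L.In Θ, (L.Sat M u φ ↔ L.Sat N (f u) φ))

end AbsLogic

/-- An abstract bi-intuitionistic logic extending `BIL`: bi-intuitionistic
formulas are present in it in their usual form and with their usual meaning. -/
structure BILExtension (A : Type) extends AbsLogic A where
  ofBIL : BILForm A → F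
  ofBIL_mem : ∀ (Θ : Set A) (φ : BILForm A), φ.letters ⊆ Θ → ofBIL φ ∈ In Θ
  ofBIL_bot : ofBIL .bot = fbot
  ofBIL_conj : ∀ φ ψ, ofBIL (.conj φ ψ) = fconj (ofBIL φ) (ofBIL ψ)
  ofBIL_disj : ∀ φ ψ, ofBIL (.disj φ ψ) = fdisj (ofBIL φ) (ofBIL ψ)
  ofBIL_impl : ∀ φ ψ, ofBIL (.impl φ ψ) = fimpl (ofBIL φ) (ofBIL ψ)
  ofBIL_coimpl : ∀ φ ψ, ofBIL (.coimpl φ ψ) = fcoimpl (ofBIL φ) (ofBIL ψ)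
  sat_ofBIL : ∀ {Ω : Type} (M : SKModel A Ω) (w : Ω) (φ : BILForm A),
      Sat M w (ofBIL φ) ↔ BILSat M φ w

/-! ### Bi-unravellings -/

/-- The universe `W^un_w` of the bi-unravelling of `M` around `w`: finite
nonempty sequences starting at `w` whose consecutive elements are
`≺`- or `≻`-related and distinct. -/
def unravDom {A Ω : Type} (M : SKModel A Ω) (w : Ω) : Set (List Ω) :=
  {l | l ≠ [] ∧ l.head? = some w ∧ (∀ x ∈ l, x ∈ M.dom) ∧
    l.Chain' (fun u v => (M.rel u v ∨ M.rel v u) ∧ u ≠ v)}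

/-- The one-step relation `ρ^un_w` of the bi-unravelling. -/
def unravStep {A Ω : Type} (M : SKModel A Ω) (w : Ω) (s t : List Ω) : Prop :=
  s ∈ unravDom M w ∧ t ∈ unravDom M w ∧
    ((∃ x y, s.getLast? = some y ∧ t = s ++ [x] ∧ M.rel y x) ∨
     (∃ x y, t.getLast? = some y ∧ s = t ++ [x] ∧ M.rel x y))

/-- The accessibility relation `≺^un_w` of the bi-unravelling: the reflexive
and transitive closure of `ρ^un_w`. -/
def unravRel {A Ω : Type} (M : SKModel A Ω) (w : Ω) : List Ω → List Ω → Prop :=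
  Relation.ReflTransGen (unravStep M w)

/-- The valuation `V^un_w` of the bi-unravelling: a sequence satisfies a
letter iff its last element does. -/
def unravVal {A Ω : Type} (M : SKModel A Ω) (w : Ω) (p : A) : Set (List Ω) :=
  {l | l ∈ unravDom M w ∧ ∃ y, l.getLast? = some y ∧ y ∈ M.val p}

/-- `U` is (a presentation of) the bi-unravelling `M^un_w` of `M` around `w`. -/
def IsUnravelling {A Ω : Type} (M : SKModel A Ω) (w : Ω) (U : SKModel A (List Ω)) : Prop :=
  U.dom = unravDom M w ∧
  (∀ α β, U.rel α β ↔ (α ∈ unravDom M w ∧ β ∈ unravDom M w ∧ unravRel M w α β)) ∧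
  (∀ p, U.val p = unravVal M w p)

/-- `M` is a bi-unravelled model presented in the canonical form: its frame is
literally the bi-unravelling frame of `M₀` around `w₀` (the valuation of `M`
is arbitrary). -/
def IsBiUnravelledForm {A Ω : Type} (M₀ : SKModel A Ω) (w₀ : Ω)
    (M : SKModel A (List Ω)) : Prop :=
  M.dom = unravDom M₀ w₀ ∧
  (∀ α β, M.rel α β ↔ (α ∈ unravDom M₀ w₀ ∧ β ∈ unravDom M₀ w₀ ∧ unravRel M₀ w₀ α β))

/-- `(N,v)` is a bi-unravelled pointed model: its underlying frame is
isomorphic, via a point-preserving order-respecting bijection, to the frame of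
some bi-unravelling. -/
def IsBiUnravelled {A Ω' : Type} (N : SKModel A Ω') (v : Ω') : Prop :=
  ∃ (Ω₀ : Type) (M₀ : SKModel A Ω₀) (w₀ : Ω₀), w₀ ∈ M₀.dom ∧
    ∃ g : Ω' → List Ω₀, Set.InjOn g N.dom ∧ g '' N.dom = unravDom M₀ w₀ ∧ g v = [w₀] ∧
      ∀ x ∈ N.dom, ∀ y ∈ N.dom, (N.rel x y ↔ unravRel M₀ w₀ (g x) (g y))

/-- `qp` and `qm` provide the fresh letters `q⁺_α`, `q⁻_α` (for `α ∈ D`)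
used to form the signature `Θ_M`. -/
def FreshLetters {A Ω : Type} (Θ : Set A) (D : Set Ω) (qp qm : Ω → A) : Prop :=
  Set.InjOn qp D ∧ Set.InjOn qm D ∧
  (∀ α ∈ D, qp α ∉ Θ) ∧ (∀ α ∈ D, qm α ∉ Θ) ∧
  (∀ α ∈ D, ∀ β ∈ D, qp α ≠ qm β)

/-- The signature `Θ_M = Θ ∪ {q⁺_α, q⁻_α : α ∈ D}`. -/
def bracketSig {A Ω : Type} (Θ : Set A) (D : Set Ω) (qp qm : Ω → A) : Set A :=
  Θ ∪ qp '' D ∪ qm '' D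

/-- `Mb` is the model `[M]`: same frame as `M`, same valuation on `Θ`, and
`β ∈ [V](q⁺_α) ↔ α ≺ β`, `β ∉ [V](q⁻_α) ↔ β ≺ α`. -/
def IsBracket {A Ω : Type} (Θ : Set A) (qp qm : Ω → A) (M Mb : SKModel A Ω) : Prop :=
  Mb.dom = M.dom ∧ (∀ u v, Mb.rel u v ↔ M.rel u v) ∧
  (∀ p ∈ Θ, Mb.val p = M.val p) ∧
  (∀ α ∈ M.dom, Mb.val (qp α) = {β | M.rel α β}) ∧
  (∀ α ∈ M.dom, Mb.val (qm α) = {β | β ∈ M.dom ∧ ¬ M.rel β α})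

/-! ### Formula schemas -/

/-- Binary formula schemas: expressions built from two placeholders and
propositional letters by `→` and `≪`. -/
inductive BILSchema (A : Type) : Type
  | v1 : BILSchema A
  | v2 : BILSchema A
  | atom : A → BILSchema A
  | impl : BILSchema A → BILSchema A → BILSchema A
  | coimpl : BILSchema A → BILSchema A → BILSchema A

namespace BILSchema

/-- The letters occurring in a schema. -/
def letters {A : Type} : BILSchema A → Set A
  | v1 => ∅
  | v2 => ∅
  | atom p => {p}
  | impl s t => letters s ∪ letters t
  | coimpl s t => letters s ∪ letters t

/-- Evaluation of a schema in an abstract logic `L` extending `BIL`, on a pair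
of `L`-formulas. -/
def eval {A : Type} (L : BILExtension A) : BILSchema A → L.F → L.F → L.F
  | v1, α, _ => α
  | v2, _, β => β
  | atom p, _, _ => L.ofBIL (.atom p)
  | impl s t, α, β => L.fimpl (eval L s α β) (eval L t α β)
  | coimpl s t, α, β => L.fcoimpl (eval L s α β) (eval L t α β)

end BILSchema

/-- `signSat b P` says that `P` holds if the sign `b` is `+` (`true`), and
that `P` fails if the sign is `−` (`false`). -/
def signSat (b : Bool) (P : Prop) : Prop := if b then P else ¬ P

/-- Iterated conjunction, with `⋀ ∅ := ⊥ → ⊥`. -/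
def bigConj {A : Type} : List (BILForm A) → BILForm A
  | [] => .impl .bot .bot
  | φ :: l => .conj φ (bigConj l)

/-- Iterated disjunction, with `⋁ ∅ := ⊥`. -/
def bigDisj {A : Type} : List (BILForm A) → BILForm A
  | [] => .bot
  | φ :: l => .disj φ (bigDisj l)

/-- `N` realizes (over the signature `Θ`) every BIL-type of its submodel `M`. -/
def BILRealizesTypesIn {A Ω : Type} (Θ : Set A) (M N : SKModel A Ω) : Prop :=
  ∀ v ∈ M.dom, ∀ Γ Δ : Set (BILForm A),
    (BILSuccType Θ M v Γ Δ → ∃ u, N.rel v u ∧ BILSatTh N u Γ Δ) ∧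
    (BILPredType Θ M v Γ Δ → ∃ u, N.rel u v ∧ BILSatTh N u Γ Δ)

section Aux

variable {A : Type}

lemma bigConj_sat {Ω : Type} (M : SKModel A Ω) (w : Ω) (_hw : w ∈ M.dom)
    (l : List (BILForm A)) :
    BILSat M (bigConj l) w ↔ ∀ φ ∈ l, BILSat M φ w := by
  induction l with
  | nil =>
    simp only [bigConj, BILSat]
    constructor
    · intro _; simp
    · intro _ v _ h; exact h.elim
  | cons φ l ih =>
    simp only [bigConj, BILSat, ih]
    simp

lemma bigDisj_sat {Ω : Type} (M : SKModel A Ω) (w : Ω) (l : List (BILForm A)) :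
    BILSat M (bigDisj l) w ↔ ∃ φ ∈ l, BILSat M φ w := by
  induction l with
  | nil => simp [bigDisj, BILSat]
  | cons φ l ih => simp [bigDisj, BILSat, ih]

lemma bigConj_letters (Θ : Set A) (l : List (BILForm A))
    (h : ∀ φ ∈ l, BILForm.letters φ ⊆ Θ) : (bigConj l).letters ⊆ Θ := by
  induction l with
  | nil => simp [bigConj, BILForm.letters]
  | cons φ l ih =>
    simp only [bigConj, BILForm.letters]
    exact Set.union_subset (h φ (by simp)) (ih fun ψ hψ => h ψ (by simp [hψ]))

lemma bigDisj_letters (Θ : Set A) (l : List (BILForm A))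
    (h : ∀ φ ∈ l, BILForm.letters φ ⊆ Θ) : (bigDisj l).letters ⊆ Θ := by
  induction l with
  | nil => simp [bigDisj, BILForm.letters]
  | cons φ l ih =>
    simp only [bigDisj, BILForm.letters]
    exact Set.union_subset (h φ (by simp)) (ih fun ψ hψ => h ψ (by simp [hψ]))

lemma finite_sub_image {α β : Type} (f : α → β) (S : Set α) :
    ∀ (Γ : Set β), Γ.Finite → Γ ⊆ f '' S →
      ∃ l : List α, (∀ x ∈ l, x ∈ S) ∧ ∀ γ ∈ Γ, ∃ x ∈ l, f x = γ := by
  intro Γ hfin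
  induction Γ, hfin using Set.Finite.induction_on with
  | empty => exact fun _ => ⟨[], by simp, by simp⟩
  | @insert γ Γ' _ _ ih =>
    intro hsub
    obtain ⟨l, hl1, hl2⟩ := ih ((Set.subset_insert _ _).trans hsub)
    obtain ⟨x, hxS, hfx⟩ := hsub (Set.mem_insert _ _)
    refine ⟨x :: l, ?_, ?_⟩
    · intro y hy
      rcases List.mem_cons.mp hy with rfl | hy
      · exact hxS
      · exact hl1 y hy
    · rintro δ (rfl | hδ)
      · exact ⟨x, by simp, hfx⟩
      · obtain ⟨y, hy, hfy⟩ := hl2 δ hδ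
        exact ⟨y, by simp [hy], hfy⟩

/-- Core realization lemma: if every finite subpair of the full positive/negative
BIL theory of `(N, t)` is realized at an `r`-image of `v` in `M`, and `M` realizes
its `r`-types (instantiated from `L`-saturation), then the full theory is realized. -/
lemma realize_theory {Ω₁ Ω₂ : Type} (L : BILExtension A) (Θ : Set A)
    (M : SKModel A Ω₁) (N : SKModel A Ω₂) (r : Ω₁ → Prop) (t : Ω₂)
    (hsatur : ∀ Γ Δ : Set L.F,
      (Γ ⊆ L.In Θ ∧ Δ ⊆ L.In Θ ∧
        ∀ Γ' ⊆ Γ, ∀ Δ' ⊆ Δ, Γ'.Finite → Δ'.Finite →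
          ∃ u, r u ∧ L.toAbsLogic.SatTh M u Γ' Δ') →
      ∃ u, r u ∧ L.toAbsLogic.SatTh M u Γ Δ)
    (hfin : ∀ φs ψs : List (BILForm A),
      (∀ φ ∈ φs, BILForm.letters φ ⊆ Θ ∧ BILSat N φ t) →
      (∀ ψ ∈ ψs, BILForm.letters ψ ⊆ Θ ∧ ¬ BILSat N ψ t) →
      ∃ u, r u ∧ (∀ φ ∈ φs, BILSat M φ u) ∧ (∀ ψ ∈ ψs, ¬ BILSat M ψ u)) :
    ∃ u, r u ∧ ∀ φ : BILForm A, BILForm.letters φ ⊆ Θ →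
      (BILSat N φ t ↔ BILSat M φ u) := by
  classical
  set Sp : Set (BILForm A) := {φ | BILForm.letters φ ⊆ Θ ∧ BILSat N φ t} with hSp
  set Sm : Set (BILForm A) := {φ | BILForm.letters φ ⊆ Θ ∧ ¬ BILSat N φ t} with hSm
  set Γ : Set L.F := L.ofBIL '' Sp with hΓ
  set Δ : Set L.F := L.ofBIL '' Sm with hΔ
  have hpre : Γ ⊆ L.In Θ ∧ Δ ⊆ L.In Θ ∧
      ∀ Γ' ⊆ Γ, ∀ Δ' ⊆ Δ, Γ'.Finite → Δ'.Finite →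
        ∃ u, r u ∧ L.toAbsLogic.SatTh M u Γ' Δ' := by
    refine ⟨?_, ?_, ?_⟩
    · rintro γ ⟨φ, hφ, rfl⟩; exact L.ofBIL_mem Θ φ hφ.1
    · rintro γ ⟨φ, hφ, rfl⟩; exact L.ofBIL_mem Θ φ hφ.1
    · intro Γ' hΓ' Δ' hΔ' hΓf hΔf
      obtain ⟨φs, hφs1, hφs2⟩ := finite_sub_image L.ofBIL Sp Γ' hΓf hΓ'
      obtain ⟨ψs, hψs1, hψs2⟩ := finite_sub_image L.ofBIL Sm Δ' hΔf hΔ'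
      obtain ⟨u, hru, hu1, hu2⟩ := hfin φs ψs (fun φ h => hφs1 φ h) (fun ψ h => hψs1 ψ h)
      refine ⟨u, hru, ?_, ?_⟩
      · intro γ hγ
        obtain ⟨φ, hφ, rfl⟩ := hφs2 γ hγ
        exact (L.sat_ofBIL M u φ).mpr (hu1 φ hφ)
      · intro γ hγ
        obtain ⟨ψ, hψ, rfl⟩ := hψs2 γ hγ
        intro hc
        exact hu2 ψ hψ ((L.sat_ofBIL M u ψ).mp hc)
  obtain ⟨u, hru, hsatΓ, hsatΔ⟩ := hsatur Γ Δ hpre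
  refine ⟨u, hru, fun φ hφ => ?_⟩
  constructor
  · intro h
    have : L.Sat M u (L.ofBIL φ) := hsatΓ _ ⟨φ, ⟨hφ, h⟩, rfl⟩
    exact (L.sat_ofBIL M u φ).mp this
  · intro h
    by_contra hn
    have : ¬ L.Sat M u (L.ofBIL φ) := hsatΔ _ ⟨φ, ⟨hφ, hn⟩, rfl⟩
    exact this ((L.sat_ofBIL M u φ).mpr h)

end Aux

/-- Corollary 4.1. Let `L` extend `BIL` and let
`(M₁,w₁)`, `(M₂,w₂)` be pointed `Θ`-models with
`Th⁺_BIL(M₁,w₁) ⊆ Th⁺_BIL(M₂,w₂)`, both `L`-saturated. Then the relation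
defined by inclusion of positive BIL-theories is a bi-asimulation from
`(M₁,w₁)` to `(M₂,w₂)`. -/
theorem bil_asimulation_corollary (A : Type) (L : BILExtension A)
    (Θ : Set A) (Ω₁ Ω₂ : Type) (M₁ : SKModel A Ω₁) (M₂ : SKModel A Ω₂)
    (w₁ : Ω₁) (w₂ : Ω₂) (hw₁ : w₁ ∈ M₁.dom) (hw₂ : w₂ ∈ M₂.dom)
    (hsub : BILThPosSubset Θ M₁ w₁ M₂ w₂)
    (hsat₁ : L.toAbsLogic.Saturated Θ M₁)
    (hsat₂ : L.toAbsLogic.Saturated Θ M₂) :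
    IsBiAsim Θ M₁ M₂ w₁ w₂
      (fun u s => u ∈ M₁.dom ∧ s ∈ M₂.dom ∧ BILThPosSubset Θ M₁ u M₂ s)
      (fun u s => u ∈ M₂.dom ∧ s ∈ M₁.dom ∧ BILThPosSubset Θ M₂ u M₁ s) := by
  constructor
  · rintro v s ⟨hv, hs, -⟩; exact ⟨hv, hs⟩
  · rintro v s ⟨hv, hs, -⟩; exact ⟨hv, hs⟩
  · exact ⟨hw₁, hw₂, hsub⟩
  · rintro p hp v s ⟨hv, hs, hvs⟩ hvp
    exact hvs (.atom p) (by simp [BILForm.letters, hp]) hvp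
  · rintro p hp v s ⟨hv, hs, hvs⟩ hvp
    exact hvs (.atom p) (by simp [BILForm.letters, hp]) hvp
  -- backR
  · rintro v s t ⟨hv, hs, hvs⟩ hst
    obtain ⟨u, hru, hthm⟩ := realize_theory L Θ M₁ M₂ (fun u => M₁.rel v u) t
      (fun Γ Δ h => (hsat₁ v hv Γ Δ).1 h)
      (by
        intro φs ψs hφ hψ
        by_contra hno
        push_neg at hno
        have hχv : BILSat M₁ (.impl (bigConj φs) (bigDisj ψs)) v := by
          intro u hru hcon
          by_contra hdis
          obtain ⟨ψ, hψm, hψs⟩ := hno u hru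
            (fun φ h => ((bigConj_sat M₁ u (M₁.rel_mem hru).2 φs).mp hcon) φ h)
          exact hdis ((bigDisj_sat M₁ u ψs).mpr ⟨ψ, hψm, hψs⟩)
        have hχs : BILSat M₂ (.impl (bigConj φs) (bigDisj ψs)) s :=
          hvs _ (Set.union_subset (bigConj_letters Θ φs fun φ h => (hφ φ h).1)
            (bigDisj_letters Θ ψs fun ψ h => (hψ ψ h).1)) hχv
        have hct : BILSat M₂ (bigDisj ψs) t :=
          hχs t hst ((bigConj_sat M₂ t (M₂.rel_mem hst).2 φs).mpr fun φ h => (hφ φ h).2)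
        obtain ⟨ψ, hψm, hψt⟩ := (bigDisj_sat M₂ t ψs).mp hct
        exact (hψ ψ hψm).2 hψt)
    exact ⟨u, hru, ⟨(M₂.rel_mem hst).2, (M₁.rel_mem hru).2,
        fun φ h hφ => (hthm φ h).mp hφ⟩,
        ⟨(M₁.rel_mem hru).2, (M₂.rel_mem hst).2, fun φ h hφ => (hthm φ h).mpr hφ⟩⟩
  -- backS
  · rintro v s t ⟨hv, hs, hvs⟩ hst
    obtain ⟨u, hru, hthm⟩ := realize_theory L Θ M₂ M₁ (fun u => M₂.rel v u) t
      (fun Γ Δ h => (hsat₂ v hv Γ Δ).1 h)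
      (by
        intro φs ψs hφ hψ
        by_contra hno
        push_neg at hno
        have hχv : BILSat M₂ (.impl (bigConj φs) (bigDisj ψs)) v := by
          intro u hru hcon
          by_contra hdis
          obtain ⟨ψ, hψm, hψs⟩ := hno u hru
            (fun φ h => ((bigConj_sat M₂ u (M₂.rel_mem hru).2 φs).mp hcon) φ h)
          exact hdis ((bigDisj_sat M₂ u ψs).mpr ⟨ψ, hψm, hψs⟩)
        have hχs : BILSat M₁ (.impl (bigConj φs) (bigDisj ψs)) s :=
          hvs _ (Set.union_subset (bigConj_letters Θ φs fun φ h => (hφ φ h).1)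
            (bigDisj_letters Θ ψs fun ψ h => (hψ ψ h).1)) hχv
        have hct : BILSat M₁ (bigDisj ψs) t :=
          hχs t hst ((bigConj_sat M₁ t (M₁.rel_mem hst).2 φs).mpr fun φ h => (hφ φ h).2)
        obtain ⟨ψ, hψm, hψt⟩ := (bigDisj_sat M₁ t ψs).mp hct
        exact (hψ ψ hψm).2 hψt)
    exact ⟨u, hru, ⟨(M₁.rel_mem hst).2, (M₂.rel_mem hru).2,
        fun φ h hφ => (hthm φ h).mp hφ⟩,
        ⟨(M₂.rel_mem hru).2, (M₁.rel_mem hst).2, fun φ h hφ => (hthm φ h).mpr hφ⟩⟩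
  -- forthR
  · rintro v s u ⟨hv, hs, hvs⟩ huv
    obtain ⟨t, hrt, hthm⟩ := realize_theory L Θ M₂ M₁ (fun t => M₂.rel t s) u
      (fun Γ Δ h => (hsat₂ s hs Γ Δ).2 h)
      (by
        intro φs ψs hφ hψ
        have hχv : BILSat M₁ (.coimpl (bigConj φs) (bigDisj ψs)) v := by
          refine ⟨u, huv, (bigConj_sat M₁ u (M₁.rel_mem huv).1 φs).mpr
            (fun φ h => (hφ φ h).2), ?_⟩
          intro hdis
          obtain ⟨ψ, hψm, hψu⟩ := (bigDisj_sat M₁ u ψs).mp hdis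
          exact (hψ ψ hψm).2 hψu
        have hχs : BILSat M₂ (.coimpl (bigConj φs) (bigDisj ψs)) s :=
          hvs _ (Set.union_subset (bigConj_letters Θ φs fun φ h => (hφ φ h).1)
            (bigDisj_letters Θ ψs fun ψ h => (hψ ψ h).1)) hχv
        obtain ⟨t, hts, hcon, hdis⟩ := hχs
        refine ⟨t, hts, fun φ h =>
          (bigConj_sat M₂ t (M₂.rel_mem hts).1 φs).mp hcon φ h, ?_⟩
        intro ψ hψm hψt
        exact hdis ((bigDisj_sat M₂ t ψs).mpr ⟨ψ, hψm, hψt⟩))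
    exact ⟨t, hrt, ⟨(M₂.rel_mem hrt).1, (M₁.rel_mem huv).1,
        fun φ h hφ => (hthm φ h).mpr hφ⟩,
        ⟨(M₁.rel_mem huv).1, (M₂.rel_mem hrt).1, fun φ h hφ => (hthm φ h).mp hφ⟩⟩
  -- forthS
  · rintro v s u ⟨hv, hs, hvs⟩ huv
    obtain ⟨t, hrt, hthm⟩ := realize_theory L Θ M₁ M₂ (fun t => M₁.rel t s) u
      (fun Γ Δ h => (hsat₁ s hs Γ Δ).2 h)
      (by
        intro φs ψs hφ hψ
        have hχv : BILSat M₂ (.coimpl (bigConj φs) (bigDisj ψs)) v := by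
          refine ⟨u, huv, (bigConj_sat M₂ u (M₂.rel_mem huv).1 φs).mpr
            (fun φ h => (hφ φ h).2), ?_⟩
          intro hdis
          obtain ⟨ψ, hψm, hψu⟩ := (bigDisj_sat M₂ u ψs).mp hdis
          exact (hψ ψ hψm).2 hψu
        have hχs : BILSat M₁ (.coimpl (bigConj φs) (bigDisj ψs)) s :=
          hvs _ (Set.union_subset (bigConj_letters Θ φs fun φ h => (hφ φ h).1)
            (bigDisj_letters Θ ψs fun ψ h => (hψ ψ h).1)) hχv
        obtain ⟨t, hts, hcon, hdis⟩ := hχs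
        refine ⟨t, hts, fun φ h =>
          (bigConj_sat M₁ t (M₁.rel_mem hts).1 φs).mp hcon φ h, ?_⟩
        intro ψ hψm hψt
        exact hdis ((bigDisj_sat M₁ t ψs).mpr ⟨ψ, hψm, hψt⟩))
    exact ⟨t, hrt, ⟨(M₁.rel_mem hrt).1, (M₂.rel_mem huv).1,
        fun φ h hφ => (hthm φ h).mpr hφ⟩,
        ⟨(M₂.rel_mem huv).1, (M₁.rel_mem hrt).1, fun φ h hφ => (hthm φ h).mp hφ⟩⟩
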